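/- Let I be a monomial ideal in K[x_1,...,x_n] that is strongly d-Golod, and let J be a monomial ideal with I : J = I : J². Then I : J is strongly d-Golod. Here a monomial ideal L is strongly d-Golod if and only if for all monomials u, v ∈ L and all indices i, j with x_i | u and x_j | v, one has uv/(x_i x_j) ∈ L. -/

import Mathlib

open MvPolynomial Pointwise

/-- An ideal of `K[x_1,…,x_n]` is a monomial ideal if with each polynomial it contains
all the monomials in its support. -/
def IsMonomialIdeal {K : Type*} [Field K] {n : ℕ}
    (I : Ideal (MvPolynomial (Fin n) K)) : Prop :=
  ∀ f ∈ I, ∀ m ∈ f.support, MvPolynomial.monomial m (1 : K) ∈ I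

/-- A monomial ideal `L` of `K[x_1,…,x_n]` is strongly d-Golod if for all monomials
`u, v ∈ L` and all variables `x_i ∣ u`, `x_j ∣ v`, one has `uv/(x_i x_j) ∈ L`. -/
def StronglyDGolod {K : Type*} [Field K] {n : ℕ}
    (L : Ideal (MvPolynomial (Fin n) K)) : Prop :=
  ∀ a b : Fin n →₀ ℕ, MvPolynomial.monomial a (1 : K) ∈ L →
    MvPolynomial.monomial b (1 : K) ∈ L →
    ∀ i j : Fin n, a i ≠ 0 → b j ≠ 0 →
      MvPolynomial.monomial (a + b - Finsupp.single i 1 - Finsupp.single j 1) (1 : K) ∈ L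



private lemma monomial_mul_mem {K : Type*} [Field K] {n : ℕ}
    (I : Ideal (MvPolynomial (Fin n) K)) (c : Fin n →₀ ℕ) (p : MvPolynomial (Fin n) K)
    (h : ∀ m ∈ p.support, monomial (c + m) (1 : K) ∈ I) :
    monomial c (1 : K) * p ∈ I := by
  nth_rewrite 1 [p.as_sum]
  rw [Finset.mul_sum]
  refine Ideal.sum_mem _ fun m hm => ?_
  rw [monomial_mul, one_mul, show monomial (c + m) (p.coeff m) =
    C (p.coeff m) * monomial (c + m) (1 : K) by rw [C_mul_monomial, mul_one]]
  exact Ideal.mul_mem_left _ _ (h m hm)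

/-- If `I` is a strongly d-Golod monomial ideal and `J` a monomial ideal with
`I : J = I : J²`, then `I : J` is strongly d-Golod. -/
theorem stronglyDGolod_colon {K : Type*} [Field K] {n : ℕ}
    (I J : Ideal (MvPolynomial (Fin n) K))
    (hI : IsMonomialIdeal I) (hJ : IsMonomialIdeal J)
    (hIG : StronglyDGolod I)
    (hq : I.colon J = I.colon ((J ^ 2 : Ideal (MvPolynomial (Fin n) K)) : Set (MvPolynomial (Fin n) K))) :
    StronglyDGolod (I.colon J) := by
  intro a b ha hb i j hi hj
  rw [hq, Submodule.mem_colon]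
  intro f hf
  rw [SetLike.mem_coe, sq] at hf
  rw [smul_eq_mul]
  refine Submodule.mul_induction_on hf (fun g hg h hh => ?_)
    (fun x y hx hy => by rw [mul_add]; exact Ideal.add_mem _ hx hy)
  apply monomial_mul_mem
  intro m hm
  obtain ⟨m1, hm1, m2, hm2, rfl⟩ := Finset.mem_add.mp (support_mul g h hm)
  have hm1J : monomial m1 (1 : K) ∈ J := hJ g hg m1 hm1
  have hm2J : monomial m2 (1 : K) ∈ J := hJ h hh m2 hm2
  have h1 : monomial (a + m1) (1 : K) ∈ I := by
    have := Submodule.mem_colon.mp ha _ hm1J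
    rwa [smul_eq_mul, monomial_mul, one_mul] at this
  have h2 : monomial (b + m2) (1 : K) ∈ I := by
    have := Submodule.mem_colon.mp hb _ hm2J
    rwa [smul_eq_mul, monomial_mul, one_mul] at this
  have key := hIG _ _ h1 h2 i j (by simp; omega) (by simp; omega)
  have hai : 1 ≤ a i := Nat.one_le_iff_ne_zero.mpr hi
  have hbj : 1 ≤ b j := Nat.one_le_iff_ne_zero.mpr hj
  have heq : a + b - Finsupp.single i 1 - Finsupp.single j 1 + (m1 + m2)
      = a + m1 + (b + m2) - Finsupp.single i 1 - Finsupp.single j 1 := by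
    ext k
    simp only [Finsupp.add_apply, Finsupp.tsub_apply, Finsupp.single_apply]
    split_ifs <;> subst_vars <;> omega
  rw [heq]
  exact key
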